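/- Let k ≥ 1 and let ∂ : ℤ^{k+1} → ℤ^k be the ℤ-linear map with ∂e_0 = f_1, ∂e_i = 2·f_i − f_{i+1} for 1 ≤ i ≤ k−1, and ∂e_k = f_k. Then every nonzero element z of the kernel of ∂ has e_0-coefficient of absolute value at least 2^{k−1}. In particular, every generator of the kernel of ∂ has a coefficient whose absolute value equals 2^{k−1}, i.e., is exponential in k. -/

import Mathlib

/-- Let `k ≥ 1` and let `∂ : ℤ^{k+1} → ℤ^k` be the ℤ-linear map with `∂e_0 = f_1`,
`∂e_i = 2·f_i − f_{i+1}` for `1 ≤ i ≤ k−1`, and `∂e_k = f_k`.  Then every nonzero element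
`z` of the kernel of `∂` has `e_0`-coefficient of absolute value at least `2^{k−1}`.
In particular, every generator of the kernel of `∂` has a coefficient whose absolute value
equals `2^{k−1}`, i.e. is exponential in `k`. -/
theorem ker_coefficients_exponential (k : ℕ) (hk : 1 ≤ k)
    (D : (Fin (k + 1) → ℤ) →ₗ[ℤ] (Fin k → ℤ))
    (hD0 : D (Pi.single (⟨0, by omega⟩ : Fin (k + 1)) 1) =
      Pi.single (⟨0, by omega⟩ : Fin k) 1)
    (hDmid : ∀ (i : ℕ) (_h1 : 1 ≤ i) (_h2 : i ≤ k - 1),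
      D (Pi.single (⟨i, by omega⟩ : Fin (k + 1)) 1) =
        (2 : ℤ) • Pi.single (⟨i - 1, by omega⟩ : Fin k) 1
          - Pi.single (⟨i, by omega⟩ : Fin k) 1)
    (hDk : D (Pi.single (⟨k, by omega⟩ : Fin (k + 1)) 1) =
      Pi.single (⟨k - 1, by omega⟩ : Fin k) 1) :
    (∀ z : Fin (k + 1) → ℤ, D z = 0 → z ≠ 0 →
        (2 : ℤ) ^ (k - 1) ≤ |z ⟨0, by omega⟩|) ∧
      ∀ z : Fin (k + 1) → ℤ, LinearMap.ker D = Submodule.span ℤ {z} →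
        ∃ i : Fin (k + 1), |z i| = (2 : ℤ) ^ (k - 1) := by
  classical
  have hcoord : ∀ (z : Fin (k+1) → ℤ) (j : Fin k),
      D z j = ∑ i : Fin (k+1), z i * (D (Pi.single i 1)) j := by
    intro z j
    have hz : z = ∑ i : Fin (k+1), z i • (Pi.single i (1:ℤ) : Fin (k+1) → ℤ) := by
      funext t
      simp [Finset.sum_apply, Pi.single_apply]
    conv_lhs => rw [hz]
    rw [map_sum]
    simp only [map_smul, Finset.sum_apply, Pi.smul_apply, smul_eq_mul]
  have hval : ∀ (i : Fin (k+1)) (j : Fin k),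
      (D (Pi.single i 1)) j =
        (if i.val = 0 then (if j.val = 0 then 1 else 0)
         else if i.val = k then (if j.val = k - 1 then 1 else 0)
         else (if j.val = i.val - 1 then 2 else 0) - (if j.val = i.val then 1 else 0)) := by
    intro i j
    rcases i with ⟨iv, hiv⟩
    by_cases h0 : iv = 0
    · subst h0
      rw [hD0]
      simp [Pi.single_apply, Fin.ext_iff]
    by_cases hkk : iv = k
    · subst hkk
      rw [if_neg h0, if_pos rfl, hDk]
      simp [Pi.single_apply, Fin.ext_iff]
    · have h1 : 1 ≤ iv := by omega
      have h2 : iv ≤ k - 1 := by omega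
      rw [if_neg h0, if_neg hkk, hDmid iv h1 h2]
      simp [Pi.single_apply, Fin.ext_iff]
  have heq : ∀ (z : Fin (k+1) → ℤ), D z = 0 → ∀ (j : ℕ) (hj : j < k),
      ∑ i : Fin (k+1), z i * (D (Pi.single i 1)) ⟨j, hj⟩ = 0 := by
    intro z h j hj
    rw [← hcoord, h]
    rfl
  have two_term : ∀ (z : Fin (k+1) → ℤ) (j : Fin k) (a b : Fin (k+1)), a ≠ b →
      (∀ i : Fin (k+1), i ≠ a → i ≠ b → (D (Pi.single i 1)) j = 0) →
      ∑ i : Fin (k+1), z i * (D (Pi.single i 1)) j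
        = z a * (D (Pi.single a 1)) j + z b * (D (Pi.single b 1)) j := by
    intro z j a b hab hzero
    rw [← Finset.sum_subset (Finset.subset_univ ({a, b} : Finset (Fin (k+1))))]
    · rw [Finset.sum_pair hab]
    · intro x _ hx
      simp only [Finset.mem_insert, Finset.mem_singleton, not_or] at hx
      rw [hzero x hx.1 hx.2, mul_zero]
  -- equation at coordinate j for 1 ≤ j ≤ k-2 : z j = 2 * z (j+1)
  have fact3 : ∀ (z : Fin (k+1) → ℤ), D z = 0 → ∀ (j : ℕ) (_h1 : 1 ≤ j) (_h2 : j ≤ k - 2),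
      z ⟨j, by omega⟩ = 2 * z ⟨j + 1, by omega⟩ := by
    intro z hz j h1 h2
    have hj : j < k := by omega
    have h := heq z hz j hj
    rw [two_term z ⟨j, hj⟩ ⟨j, by omega⟩ ⟨j+1, by omega⟩
      (by intro hab; have := congrArg Fin.val hab; simp only [Fin.val_mk] at this; omega)
      (by
        intro i hia hib
        have hi2 := i.2
        rw [hval]
        rw [Fin.ne_iff_vne] at hia hib
        simp only [Fin.val_mk] at hia hib ⊢
        split_ifs <;> omega)] at h
    rw [hval, hval] at h
    simp only [Fin.val_mk] at h
    rw [if_neg (show ¬ j = 0 by omega), if_neg (show ¬ j = k by omega),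
      if_neg (show ¬ j = j - 1 by omega),
      if_neg (show ¬ j + 1 = 0 by omega), if_neg (show ¬ j + 1 = k by omega),
      if_pos (show j = j + 1 - 1 by omega), if_neg (show ¬ j = j + 1 by omega)] at h
    simp only [if_true] at h
    linarith
  -- equation at coordinate k-1 (k ≥ 2) : z (k-1) = z k
  have fact4 : ∀ (z : Fin (k+1) → ℤ), D z = 0 → 2 ≤ k →
      z ⟨k - 1, by omega⟩ = z ⟨k, by omega⟩ := by
    intro z hz hk2
    have hj : k - 1 < k := by omega
    have h := heq z hz (k-1) hj
    rw [two_term z ⟨k-1, hj⟩ ⟨k-1, by omega⟩ ⟨k, by omega⟩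
      (by intro hab; have := congrArg Fin.val hab; simp only [Fin.val_mk] at this; omega)
      (by
        intro i hia hib
        have hi2 := i.2
        rw [hval]
        rw [Fin.ne_iff_vne] at hia hib
        simp only [Fin.val_mk] at hia hib ⊢
        split_ifs <;> omega)] at h
    rw [hval, hval] at h
    simp only [Fin.val_mk] at h
    rw [if_neg (show ¬ k - 1 = 0 by omega), if_neg (show ¬ k - 1 = k by omega),
      if_neg (show ¬ k - 1 = k - 1 - 1 by omega), if_neg (show ¬ k = 0 by omega)] at h
    simp only [if_true] at h
    linarith
  -- equation at coordinate 0, k = 1 : z 0 + z 1 = 0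
  have fact1 : ∀ (z : Fin (k+1) → ℤ), D z = 0 → ∀ (_hk1 : k = 1),
      z ⟨0, by omega⟩ + z ⟨1, by omega⟩ = 0 := by
    intro z hz hk1
    have hj : 0 < k := by omega
    have h := heq z hz 0 hj
    rw [two_term z ⟨0, hj⟩ ⟨0, by omega⟩ ⟨1, by omega⟩
      (by intro hab; have := congrArg Fin.val hab; simp only [Fin.val_mk] at this; omega)
      (by
        intro i hia hib
        have hi2 := i.2
        rw [hval]
        rw [Fin.ne_iff_vne] at hia hib
        simp only [Fin.val_mk] at hia hib ⊢
        split_ifs <;> omega)] at h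
    rw [hval, hval] at h
    simp only [Fin.val_mk] at h
    rw [if_neg (show ¬ (1:ℕ) = 0 by omega), if_pos (show (1:ℕ) = k by omega),
      if_pos (show (0:ℕ) = k - 1 by omega)] at h
    simp only [if_true] at h
    linarith
  -- equation at coordinate 0, k ≥ 2 : z 0 + 2 * z 1 = 0
  have fact2 : ∀ (z : Fin (k+1) → ℤ), D z = 0 → 2 ≤ k →
      z ⟨0, by omega⟩ + 2 * z ⟨1, by omega⟩ = 0 := by
    intro z hz hk2
    have hj : 0 < k := by omega
    have h := heq z hz 0 hj
    rw [two_term z ⟨0, hj⟩ ⟨0, by omega⟩ ⟨1, by omega⟩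
      (by intro hab; have := congrArg Fin.val hab; simp only [Fin.val_mk] at this; omega)
      (by
        intro i hia hib
        have hi2 := i.2
        rw [hval]
        rw [Fin.ne_iff_vne] at hia hib
        simp only [Fin.val_mk] at hia hib ⊢
        split_ifs <;> omega)] at h
    rw [hval, hval] at h
    simp only [Fin.val_mk] at h
    rw [if_neg (show ¬ (1:ℕ) = 0 by omega), if_neg (show ¬ (1:ℕ) = k by omega),
      if_neg (show ¬ (0:ℕ) = 1 by omega)] at h
    simp only [if_true] at h
    linarith
  -- the kernel formulas
  have formB : ∀ (z : Fin (k+1) → ℤ), D z = 0 → ∀ (m : ℕ), m ≤ k - 1 →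
      z ⟨k - m, by omega⟩ = 2 ^ (m - 1) * z ⟨k, by omega⟩ := by
    intro z hz m
    induction m with
    | zero => intro _; simp
    | succ n ih =>
      intro hm
      rcases Nat.eq_zero_or_pos n with hn | hn
      · subst hn
        simpa using fact4 z hz (by omega)
      · have h1 : 1 ≤ k - (n+1) := by omega
        have h2 : k - (n+1) ≤ k - 2 := by omega
        have hs := fact3 z hz (k - (n+1)) h1 h2
        have he : ((⟨k - (n+1) + 1, by omega⟩ : Fin (k+1))) = ⟨k - n, by omega⟩ :=
          Fin.ext (by simp only [Fin.val_mk]; omega)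
        rw [he] at hs
        rw [hs, ih (by omega)]
        rw [show (n+1) - 1 = (n-1) + 1 from by omega, pow_succ]
        ring
  have formJ : ∀ (z : Fin (k+1) → ℤ), D z = 0 → ∀ (j : ℕ) (h1 : 1 ≤ j) (h2 : j ≤ k),
      z ⟨j, by omega⟩ = 2 ^ (k - 1 - j) * z ⟨k, by omega⟩ := by
    intro z hz j h1 h2
    have hf := formB z hz (k - j) (by omega)
    have he : ((⟨k - (k - j), by omega⟩ : Fin (k+1))) = ⟨j, by omega⟩ :=
      Fin.ext (by simp only [Fin.val_mk]; omega)
    rw [he] at hf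
    rw [hf]
    congr 2
    omega
  have form0 : ∀ (z : Fin (k+1) → ℤ), D z = 0 →
      z ⟨0, by omega⟩ = -(2 ^ (k - 1)) * z ⟨k, by omega⟩ := by
    intro z hz
    have h1 := formJ z hz 1 le_rfl hk
    by_cases hk1 : k = 1
    · have h12 := fact1 z hz hk1
      rw [h1] at h12
      have : k - 1 - 1 = k - 1 := by omega
      rw [this] at h12
      linarith
    · have h12 := fact2 z hz (by omega)
      rw [h1] at h12
      have h2 : (2:ℤ) * (2 ^ (k - 1 - 1) * z ⟨k, by omega⟩)
          = 2 ^ (k-1) * z ⟨k, by omega⟩ := by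
        rw [← mul_assoc, ← pow_succ']
        congr 2
        omega
      linarith
  -- if z k = 0 then z = 0
  have zeroOf : ∀ (z : Fin (k+1) → ℤ), D z = 0 → z ⟨k, by omega⟩ = 0 → z = 0 := by
    intro z hz hzk
    funext i
    rcases i with ⟨iv, hiv⟩
    rcases Nat.eq_zero_or_pos iv with h0 | h0
    · subst h0
      rw [Pi.zero_apply, form0 z hz, hzk, mul_zero]
    · rw [Pi.zero_apply, formJ z hz iv h0 (by omega), hzk, mul_zero]
  constructor
  · intro z hz hne
    have h0 := form0 z hz
    have hzk : z ⟨k, by omega⟩ ≠ 0 := fun h => hne (zeroOf z hz h)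
    rw [h0, abs_mul, abs_neg, abs_pow]
    have h1 : (1:ℤ) ≤ |z ⟨k, by omega⟩| := Int.one_le_abs hzk
    calc (2:ℤ) ^ (k-1) = |(2:ℤ)| ^ (k-1) * 1 := by norm_num
      _ ≤ |(2:ℤ)| ^ (k-1) * |z ⟨k, by omega⟩| :=
          mul_le_mul_of_nonneg_left h1 (by positivity)
  · intro z hker
    have hnotinj : ¬ Function.Injective D := by
      intro hinj
      have hle := LinearMap.finrank_le_finrank_of_injective hinj
      rw [Module.finrank_fintype_fun_eq_card, Module.finrank_fintype_fun_eq_card] at hle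
      simp at hle
    rw [Function.not_injective_iff] at hnotinj
    obtain ⟨a, b, hab, hne⟩ := hnotinj
    have hu : D (a - b) = 0 := by rw [map_sub, hab, sub_self]
    have hune : a - b ≠ 0 := sub_ne_zero_of_ne hne
    have humem : a - b ∈ Submodule.span ℤ {z} := by rw [← hker]; exact hu
    have hzmem : D z = 0 := by
      have : z ∈ LinearMap.ker D := by
        rw [hker]; exact Submodule.mem_span_singleton_self z
      exact this
    have hzne : z ≠ 0 := by
      rintro rfl
      rw [Submodule.mem_span_singleton] at humem
      obtain ⟨c, hc⟩ := humem
      rw [smul_zero] at hc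
      exact hune hc.symm
    have htne : z ⟨k, by omega⟩ ≠ 0 := fun h => hzne (zeroOf z hzmem h)
    set v : Fin (k+1) → ℤ := fun i => if i.val = 0 then -(2 ^ (k-1)) else 2 ^ (k - 1 - i.val)
      with hv
    have hzv : z = z ⟨k, by omega⟩ • v := by
      funext i
      rcases i with ⟨iv, hiv⟩
      rcases Nat.eq_zero_or_pos iv with h0 | h0
      · subst h0
        rw [form0 z hzmem]
        simp only [hv, Pi.smul_apply, smul_eq_mul, Fin.val_mk, if_true]
        ring
      · rw [formJ z hzmem iv h0 (by omega)]
        simp only [hv, Pi.smul_apply, smul_eq_mul, Fin.val_mk,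
          if_neg (Nat.pos_iff_ne_zero.mp h0)]
        ring
    have hDv : D v = 0 := by
      have hsm : z ⟨k, by omega⟩ • D v = 0 := by
        rw [← map_smul, ← hzv, hzmem]
      funext j
      have hj := congrFun hsm j
      rw [Pi.smul_apply, smul_eq_mul] at hj
      rcases mul_eq_zero.mp hj with h | h
      · exact absurd h htne
      · exact h
    have hvmem : v ∈ Submodule.span ℤ {z} := by rw [← hker]; exact hDv
    rw [Submodule.mem_span_singleton] at hvmem
    obtain ⟨c, hc⟩ := hvmem
    have hvk : v ⟨k, by omega⟩ = 1 := by
      simp only [hv, Fin.val_mk, if_neg (by omega : ¬ k = 0)]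
      rw [show k - 1 - k = 0 from by omega, pow_zero]
    have hct : c * z ⟨k, by omega⟩ = 1 := by
      have hck := congrFun hc ⟨k, by omega⟩
      rw [Pi.smul_apply, smul_eq_mul, hvk] at hck
      exact hck
    have habs : |z ⟨k, by omega⟩| = 1 := by
      rcases Int.isUnit_iff.mp
        (IsUnit.of_mul_eq_one (a := z ⟨k, by omega⟩) c (by linarith [mul_comm c (z ⟨k, by omega⟩)])) with
        h | h <;> simp [h]
    refine ⟨⟨0, by omega⟩, ?_⟩
    rw [form0 z hzmem, abs_mul, abs_neg, abs_pow, habs]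
    norm_num
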